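/- Assume additionally 0 < K̄ < 1. There exists an integer T₀ such that for every integer T ≥ T₀: K̄β + 2√(βL̄K₁/ρ) ≥ ρ(B_T) ≥ (2K̄β·cos²(π/(T+2)) − K̄β) + (1/2)·√( (4K̄β·cos²(π/(T+2)) − 2K̄β)² − 4·((K̄β)² − 4·(βL̄K₁/ρ)·cos²(π/(T+2))) ). -/

import Mathlib

noncomputable section

/-- The spectral radius of a real square matrix: the maximum modulus of its
complex eigenvalues. -/
def specRad {n : ℕ} (A : Matrix (Fin n) (Fin n) ℝ) : ℝ :=
  sSup {x : ℝ | ∃ μ : ℂ, μ ∈ spectrum ℂ (A.map Complex.ofReal) ∧ x = ‖μ‖}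

/-- `L̄ = L₁ / (1 - β K₁ / 2)`. -/
def Lbar (L1 K1 β : ℝ) : ℝ := L1 / (1 - β * K1 / 2)

/-- `K̄ = 3K₁/2 + K₁ L̄ / (2 ρ (1 - β))`. -/
def Kbar (L1 K1 rho β : ℝ) : ℝ := 3 * K1 / 2 + K1 * Lbar L1 K1 β / (2 * rho * (1 - β))

/-- `K̂ = K̄ + K₁ L̄ / ρ`. -/
def Khat (L1 K1 rho β : ℝ) : ℝ := Kbar L1 K1 rho β + K1 * Lbar L1 K1 β / rho

/-- `r = K̄ β + (K₁/ρ) L₁ β`. -/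
def rconst (L1 K1 rho β : ℝ) : ℝ := Kbar L1 K1 rho β * β + (K1 / rho) * L1 * β

/-- The `T × T` matrix `A_T` (1-based indices `1 ≤ i, j ≤ T` correspond to `0`-based
`Fin T` values `i-1, j-1`): entry `K̄ + L̄K₁/ρ` if `j = i - 1`, entry `(L̄K₁/ρ) β^(j-i+1)`
if `i - 1 < j ≤ T - 1`, entry `(L₁K₁/ρ) β^(T-i+1)` if `j = T`, and `0` if `j < i - 1`. -/
def AT (L1 K1 rho β : ℝ) (T : ℕ) : Matrix (Fin T) (Fin T) ℝ :=
  fun i j =>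
    if (j : ℕ) + 1 = T then (L1 * K1 / rho) * β ^ (T - (i : ℕ))
    else if (j : ℕ) + 1 = (i : ℕ) then Kbar L1 K1 rho β + Lbar L1 K1 β * K1 / rho
    else if (i : ℕ) ≤ (j : ℕ) then (Lbar L1 K1 β * K1 / rho) * β ^ ((j : ℕ) - (i : ℕ) + 1)
    else 0

end

noncomputable section

/-- The `(T+1) × (T+1)` matrix `B_T` (1-based indices `1 ≤ i, j ≤ T+1`): entry `β` on the
superdiagonal `j = i + 1`, entry `(L̄K₁/ρ) K̄^{i-j-1}` if `j < i`, and `0` otherwise. -/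
def BT (L1 K1 rho β : ℝ) (T : ℕ) : Matrix (Fin (T + 1)) (Fin (T + 1)) ℝ :=
  fun i j =>
    if (j : ℕ) = (i : ℕ) + 1 then β
    else if (j : ℕ) < (i : ℕ) then
      (Lbar L1 K1 β * K1 / rho) * (Kbar L1 K1 rho β) ^ ((i : ℕ) - (j : ℕ) - 1)
    else 0

end


open Matrix Finset
open scoped ENNReal NNReal

section SpectralHelpers

attribute [local instance] Matrix.linftyOpNormedRing Matrix.linftyOpNormedAlgebra

lemma exists_eigvec {n : ℕ} (M : Matrix (Fin n) (Fin n) ℂ) {μ : ℂ} (h : μ ∈ spectrum ℂ M) :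
    ∃ x : Fin n → ℂ, x ≠ 0 ∧ M *ᵥ x = μ • x := by
  rw [spectrum.mem_iff] at h
  have hdet : (algebraMap ℂ (Matrix (Fin n) (Fin n) ℂ) μ - M).det = 0 := by
    by_contra hd
    exact h ((Matrix.isUnit_iff_isUnit_det _).mpr (isUnit_iff_ne_zero.mpr hd))
  obtain ⟨x, hx0, hx⟩ := (Matrix.exists_mulVec_eq_zero_iff).mpr hdet
  refine ⟨x, hx0, ?_⟩
  rw [Matrix.sub_mulVec] at hx
  have h1 : (algebraMap ℂ (Matrix (Fin n) (Fin n) ℂ) μ) *ᵥ x = μ • x := by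
    rw [Algebra.algebraMap_eq_smul_one, Matrix.smul_mulVec, Matrix.one_mulVec]
  rw [h1, sub_eq_zero] at hx
  exact hx.symm


lemma eig_upper {n : ℕ} (B : Matrix (Fin n) (Fin n) ℝ) (hB : ∀ i j, 0 ≤ B i j)
    (v : Fin n → ℝ) (hv : ∀ i, 0 < v i) (lam : ℝ)
    (h : ∀ i, B.mulVec v i ≤ lam * v i) {μ : ℂ}
    (hμ : μ ∈ spectrum ℂ (B.map Complex.ofReal)) : ‖μ‖ ≤ lam := by
  obtain ⟨x, hx0, hx⟩ := exists_eigvec _ hμ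
  obtain ⟨j0, hj0⟩ := Function.ne_iff.mp hx0
  have hj0' : x j0 ≠ 0 := hj0
  have hne : (Finset.univ : Finset (Fin n)).Nonempty := ⟨j0, Finset.mem_univ _⟩
  obtain ⟨i0, -, hmax⟩ := Finset.exists_max_image Finset.univ
    (fun i => ‖x i‖ / v i) hne
  have hxi0 : 0 < ‖x i0‖ := by
    have h0 := hmax j0 (Finset.mem_univ _)
    have h1 : 0 < ‖x j0‖ / v j0 :=
      div_pos (by simpa using hj0') (hv j0)
    have h2 : 0 < ‖x i0‖ / v i0 := lt_of_lt_of_le h1 h0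
    have h3 := hv i0
    by_contra hc
    push_neg at hc
    have : ‖x i0‖ = 0 := le_antisymm hc (norm_nonneg _)
    rw [this, zero_div] at h2
    exact lt_irrefl 0 h2
  have key : ‖μ‖ * ‖x i0‖ ≤ lam * ‖x i0‖ := by
    have hmv : (B.map Complex.ofReal *ᵥ x) i0 = μ * x i0 := by
      rw [hx]; rfl
    calc ‖μ‖ * ‖x i0‖ = ‖μ * x i0‖ := (norm_mul _ _).symm
      _ = ‖∑ j, (B i0 j : ℂ) * x j‖ := by
          rw [← hmv]; rfl
      _ ≤ ∑ j, ‖(B i0 j : ℂ) * x j‖ :=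
          norm_sum_le _ _
      _ = ∑ j, B i0 j * ‖x j‖ := by
          refine Finset.sum_congr rfl fun j _ => ?_
          rw [norm_mul, Complex.norm_real, Real.norm_eq_abs, abs_of_nonneg (hB i0 j)]
      _ ≤ ∑ j, B i0 j * ((‖x i0‖ / v i0) * v j) := by
          refine Finset.sum_le_sum fun j _ => ?_
          refine mul_le_mul_of_nonneg_left ?_ (hB i0 j)
          have h0 := hmax j (Finset.mem_univ _)
          have hvj := hv j
          calc ‖x j‖ = ‖x j‖ / v j * v j := by field_simp
            _ ≤ ‖x i0‖ / v i0 * v j :=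
                mul_le_mul_of_nonneg_right h0 (le_of_lt hvj)
      _ = (‖x i0‖ / v i0) * (B.mulVec v i0) := by
          rw [Matrix.mulVec, dotProduct, Finset.mul_sum]
          exact Finset.sum_congr rfl fun j _ => by ring
      _ ≤ (‖x i0‖ / v i0) * (lam * v i0) := by
          have hnn : 0 ≤ ‖x i0‖ / v i0 := div_nonneg (norm_nonneg _) (hv i0).le
          exact mul_le_mul_of_nonneg_left (h i0) hnn
      _ = lam * ‖x i0‖ := by
          have := (hv i0).ne'
          field_simp
  exact le_of_mul_le_mul_right key hxi0

lemma eig_lower {n : ℕ} (hn : 0 < n) (B : Matrix (Fin n) (Fin n) ℝ) (hB : ∀ i j, 0 ≤ B i j)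
    (v : Fin n → ℝ) (hv : ∀ i, 0 < v i) (lam : ℝ) (hlam : 0 ≤ lam)
    (h : ∀ i, lam * v i ≤ B.mulVec v i) :
    ∃ μ : ℂ, μ ∈ spectrum ℂ (B.map Complex.ofReal) ∧ lam ≤ ‖μ‖ := by
  haveI : Nonempty (Fin n) := ⟨⟨0, hn⟩⟩
  set A := B.map Complex.ofReal with hA
  -- powers bound
  have hpow : ∀ k : ℕ, ∀ i, lam ^ k * v i ≤ (B ^ k).mulVec v i := by
    intro k
    induction k with
    | zero => intro i; simp [Matrix.one_mulVec]
    | succ k ih =>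
      intro i
      have hstep : (B ^ (k+1)).mulVec v i = B.mulVec ((B ^ k).mulVec v) i := by
        rw [pow_succ', Matrix.mulVec_mulVec]
      rw [hstep]
      have h1 : lam ^ k * (B.mulVec v i) ≤ B.mulVec ((B ^ k).mulVec v) i := by
        rw [Matrix.mulVec, Matrix.mulVec, dotProduct, dotProduct, Finset.mul_sum]
        refine Finset.sum_le_sum fun j _ => ?_
        have := ih j
        calc lam ^ k * (B i j * v j) = B i j * (lam ^ k * v j) := by ring
          _ ≤ B i j * ((B ^ k).mulVec v j) :=
            mul_le_mul_of_nonneg_left (ih j) (hB i j)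
      calc lam ^ (k+1) * v i = lam ^ k * (lam * v i) := by ring
        _ ≤ lam ^ k * (B.mulVec v i) :=
          mul_le_mul_of_nonneg_left (h i) (pow_nonneg hlam k)
        _ ≤ _ := h1
  -- argmax of v
  obtain ⟨i0, -, hmax⟩ := Finset.exists_max_image Finset.univ v ⟨⟨0, hn⟩, Finset.mem_univ _⟩
  -- norm lower bound
  have hnorm : ∀ k : ℕ, lam ^ k ≤ ‖A ^ k‖ := by
    intro k
    have hmap : A ^ k = (B ^ k).map Complex.ofReal := by
      exact (map_pow (Complex.ofRealHom.mapMatrix) B k).symm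
    set x : Fin n → ℂ := fun j => (v j : ℂ) with hxdef
    have hxnorm : ‖x‖ ≤ v i0 := by
      refine (pi_norm_le_iff_of_nonneg (hv i0).le).mpr fun j => ?_
      simp only [hxdef, Complex.norm_real, Real.norm_eq_abs, abs_of_nonneg (hv j).le]
      exact hmax j (Finset.mem_univ _)
    have hmv : (A ^ k *ᵥ x) i0 = (((B ^ k) *ᵥ v) i0 : ℂ) := by
      rw [hmap]
      simp only [Matrix.mulVec, dotProduct, Matrix.map_apply, hxdef]
      push_cast
      rfl
    have h2 : lam ^ k * v i0 ≤ ‖A ^ k *ᵥ x‖ := by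
      calc lam ^ k * v i0 ≤ ((B ^ k) *ᵥ v) i0 := hpow k i0
        _ ≤ ‖(A ^ k *ᵥ x) i0‖ := by
            rw [hmv, Complex.norm_real, Real.norm_eq_abs]
            exact le_abs_self _
        _ ≤ ‖A ^ k *ᵥ x‖ := norm_le_pi_norm _ i0
    have h3 : ‖A ^ k *ᵥ x‖ ≤ ‖A ^ k‖ * v i0 := by
      calc ‖A ^ k *ᵥ x‖ ≤ ‖A ^ k‖ * ‖x‖ := Matrix.linfty_opNorm_mulVec _ _
        _ ≤ ‖A ^ k‖ * v i0 := mul_le_mul_of_nonneg_left hxnorm (norm_nonneg _)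
    have := le_trans h2 h3
    exact le_of_mul_le_mul_right this (hv i0)
  -- Gelfand
  have hsr : ENNReal.ofReal lam ≤ spectralRadius ℂ A := by
    refine ge_of_tendsto (spectrum.pow_nnnorm_pow_one_div_tendsto_nhds_spectralRadius A) ?_
    filter_upwards [Filter.eventually_ge_atTop 1] with k hk
    have hk0 : (k : ℝ) ≠ 0 := Nat.cast_ne_zero.mpr (Nat.one_le_iff_ne_zero.mp hk)
    have h1 : ENNReal.ofReal (lam ^ k) ≤ (‖A ^ k‖₊ : ℝ≥0∞) := by
      rw [← enorm_eq_nnnorm, ← ofReal_norm]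
      exact ENNReal.ofReal_le_ofReal (hnorm k)
    calc ENNReal.ofReal lam
        = ((ENNReal.ofReal lam) ^ k) ^ (1 / (k : ℝ)) := by
          rw [← ENNReal.rpow_natCast, ← ENNReal.rpow_mul, mul_one_div_cancel hk0,
            ENNReal.rpow_one]
      _ = (ENNReal.ofReal (lam ^ k)) ^ (1 / (k : ℝ)) := by
          rw [ENNReal.ofReal_pow hlam]
      _ ≤ (‖A ^ k‖₊ : ℝ≥0∞) ^ (1 / (k : ℝ)) := by
          exact ENNReal.rpow_le_rpow h1 (by positivity)
  haveI : Nontrivial (Matrix (Fin n) (Fin n) ℂ) := by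
    refine ⟨0, 1, fun hc => ?_⟩
    have := congr_fun (congr_fun hc ⟨0, hn⟩) ⟨0, hn⟩
    simp [Matrix.one_apply] at this
  obtain ⟨z, hz, hznorm⟩ := spectrum.exists_nnnorm_eq_spectralRadius (a := A)
  refine ⟨z, hz, ?_⟩
  have : ENNReal.ofReal lam ≤ ENNReal.ofReal ‖z‖ := by
    rw [ofReal_norm, enorm_eq_nnnorm, hznorm]; exact hsr
  have := (ENNReal.ofReal_le_ofReal_iff (norm_nonneg z)).mp this
  exact this

lemma row_abs (β Kb c' : ℝ) (T : ℕ) (BM : Matrix (Fin (T + 1)) (Fin (T + 1)) ℝ)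
    (hBM : ∀ i j : Fin (T + 1), BM i j =
      if (j : ℕ) = (i : ℕ) + 1 then β
      else if (j : ℕ) < (i : ℕ) then c' * Kb ^ ((i : ℕ) - (j : ℕ) - 1) else 0)
    (f : ℕ → ℝ) (i : Fin (T + 1)) :
    BM.mulVec (fun j => f ((j : ℕ) + 1)) i
      = (if (i : ℕ) + 1 < T + 1 then β * f ((i : ℕ) + 2) else 0)
        + c' * ∑ k ∈ Finset.range (i : ℕ), Kb ^ ((i : ℕ) - k - 1) * f (k + 1) := by
  have hstep : BM.mulVec (fun j => f ((j : ℕ) + 1)) i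
      = ∑ m ∈ Finset.range (T + 1),
          (if m = (i : ℕ) + 1 then β * f (m + 1) else 0)
          + ∑ m ∈ Finset.range (T + 1),
          (if m < (i : ℕ) then
            (c') * (Kb) ^ ((i : ℕ) - m - 1) * f (m + 1)
          else 0) := by
    rw [Matrix.mulVec, dotProduct, ← Finset.sum_add_distrib]
    simp only [hBM]
    rw [Fin.sum_univ_eq_sum_range (fun m =>
      (if m = (i : ℕ) + 1 then β
        else if m < (i : ℕ) then
          (c') * (Kb) ^ ((i : ℕ) - m - 1)
        else 0) * f (m + 1)) (T + 1)]
    refine Finset.sum_congr rfl fun m _ => ?_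
    split_ifs with h1 h2
    · omega
    · ring
    · ring
    · ring
  rw [hstep]
  congr 1
  · rw [Finset.sum_ite_eq' (Finset.range (T + 1)) ((i : ℕ) + 1) (fun m => β * f (m + 1))]
    by_cases h : (i : ℕ) + 1 < T + 1
    · rw [if_pos (Finset.mem_range.mpr h), if_pos h]
    · rw [if_neg (fun hc => h (Finset.mem_range.mp hc)), if_neg h]
  · rw [Finset.mul_sum]
    rw [← Finset.sum_subset (Finset.range_subset_range.mpr (by omega : (i:ℕ) ≤ T + 1))
      (fun m _ hm => if_neg (by simp at hm ⊢; omega))]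
    refine Finset.sum_congr rfl fun m hm => ?_
    rw [if_pos (Finset.mem_range.mp hm)]
    ring


lemma sum_rec (Kb : ℝ) (f : ℕ → ℝ) (m : ℕ) :
    ∑ k ∈ Finset.range (m + 1), Kb ^ (m + 1 - k - 1) * f (k + 1)
      = Kb * (∑ k ∈ Finset.range m, Kb ^ (m - k - 1) * f (k + 1)) + f (m + 1) := by
  rw [Finset.sum_range_succ, Finset.mul_sum]
  have h1 : m + 1 - m - 1 = 0 := by omega
  rw [h1, pow_zero, one_mul]
  congr 1
  refine Finset.sum_congr rfl fun k hk => ?_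
  have hk' := Finset.mem_range.mp hk
  have h2 : m + 1 - k - 1 = (m - k - 1) + 1 := by omega
  rw [h2, pow_succ]
  ring

set_option maxHeartbeats 2000000 in
lemma specBound (T : ℕ) (β Kb c' : ℝ) (hβ0 : 0 < β) (hKb0 : 0 < Kb) (hc'0 : 0 < c')
    (BM : Matrix (Fin (T + 1)) (Fin (T + 1)) ℝ)
    (hBM : ∀ i j : Fin (T + 1), BM i j =
      if (j : ℕ) = (i : ℕ) + 1 then β
      else if (j : ℕ) < (i : ℕ) then c' * Kb ^ ((i : ℕ) - (j : ℕ) - 1) else 0)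
    (hsmall1 : (Real.pi / ((T : ℝ) + 2)) ^ 2 ≤ 1 / 2)
    (hsmall2 : (Kb * β) ^ 2 * (Real.pi / ((T : ℝ) + 2)) ^ 2 ≤ β * c') :
    Kb * β + 2 * Real.sqrt (β * c') ≥ specRad BM
    ∧ specRad BM ≥ (2 * Kb * β * (Real.cos (Real.pi / ((T : ℝ) + 2))) ^ 2 - Kb * β)
        + 1 / 2 * Real.sqrt ((4 * Kb * β * (Real.cos (Real.pi / ((T : ℝ) + 2))) ^ 2
              - 2 * Kb * β) ^ 2
            - 4 * ((Kb * β) ^ 2 - 4 * (β * c') * (Real.cos (Real.pi / ((T : ℝ) + 2))) ^ 2)) := by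
  have hπ3 := Real.pi_gt_three
  have hT2 : (0 : ℝ) < (T : ℝ) + 2 := by positivity
  set θ := Real.pi / ((T : ℝ) + 2) with hθ
  have hθp : 0 < θ := div_pos Real.pi_pos hT2
  have hθT : θ * ((T : ℝ) + 2) = Real.pi := by rw [hθ]; field_simp
  have hθ1 : θ ≤ 1 := by nlinarith
  have hθpi2 : θ < Real.pi / 2 := by linarith
  set s := Real.sin θ with hs
  set c := Real.cos θ with hc
  have hsp : 0 < s := Real.sin_pos_of_pos_of_lt_pi hθp (by linarith)
  have hsθ : s ≤ θ := Real.sin_le hθp.le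
  have hcp : 0 < c := Real.cos_pos_of_mem_Ioo ⟨by linarith, hθpi2⟩
  have hpyth : s ^ 2 + c ^ 2 = 1 := Real.sin_sq_add_cos_sq θ
  have hc2 : 1 / 2 ≤ c ^ 2 := by nlinarith
  have hc1 : c ≤ 1 := Real.cos_le_one θ
  -- the discriminant quantity
  have hs2θ2 : s ^ 2 ≤ θ ^ 2 := by nlinarith
  have hwarg : 0 ≤ β * c' - (Kb * β) ^ 2 * (1 - c ^ 2) := by
    nlinarith [mul_le_mul_of_nonneg_left hs2θ2 (sq_nonneg (Kb * β))]
  obtain ⟨w, hw⟩ : ∃ x, x = Real.sqrt (β * c' - (Kb * β) ^ 2 * (1 - c ^ 2)) := ⟨_, rfl⟩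
  have hwnn : 0 ≤ w := hw ▸ Real.sqrt_nonneg _
  have hw2 : w ^ 2 = β * c' - (Kb * β) ^ 2 * (1 - c ^ 2) := by
    rw [hw]; exact Real.sq_sqrt hwarg
  obtain ⟨lam0, hlam0⟩ : ∃ x, x = 2 * Kb * β * c ^ 2 - Kb * β + 2 * c * w := ⟨_, rfl⟩
  have hKbβ : 0 < Kb * β := mul_pos hKb0 hβ0
  have hlam0nn : 0 ≤ lam0 := by rw [hlam0]; nlinarith
  have hlam_a : 0 < lam0 + Kb * β := by rw [hlam0]; nlinarith
  have hF3 : (lam0 + Kb * β) ^ 2 = 4 * c ^ 2 * (Kb * β * lam0 + β * c') := by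
    rw [hlam0]; linear_combination (4 * c ^ 2) * hw2
  have hab : 0 < Kb * β * lam0 + β * c' := by
    by_contra hcon
    push_neg at hcon
    have h1 : (0:ℝ) < (lam0 + Kb * β) ^ 2 := pow_pos hlam_a 2
    have h2 : (0:ℝ) < c ^ 2 := pow_pos hcp 2
    have h3 : 4 * c ^ 2 * (Kb * β * lam0 + β * c') ≤ 0 := by
      have := mul_nonneg (by linarith : (0:ℝ) ≤ 4 * c ^ 2) (by linarith : (0:ℝ) ≤ -(Kb * β * lam0 + β * c'))
      nlinarith
    linarith [hF3 ▸ h1]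
  obtain ⟨rr, hrr⟩ : ∃ x, x = Real.sqrt ((Kb * β * lam0 + β * c') / β ^ 2) := ⟨_, rfl⟩
  have hrrp : 0 < rr := by rw [hrr]; exact Real.sqrt_pos.mpr (by positivity)
  have hrr2 : β * rr ^ 2 = Kb * lam0 + c' := by
    rw [hrr, Real.sq_sqrt (by positivity)]
    field_simp
  have hβrr : β * rr = Real.sqrt (Kb * β * lam0 + β * c') := by
    have h1 : (β * rr) ^ 2 = Kb * β * lam0 + β * c' := by
      rw [hrr, mul_pow, Real.sq_sqrt (by positivity)]
      field_simp
    rw [← h1, Real.sqrt_sq (by positivity)]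
  have hrrc : 2 * β * rr * c = lam0 + Kb * β := by
    have h1 : lam0 + Kb * β = Real.sqrt ((lam0 + Kb * β) ^ 2) :=
      (Real.sqrt_sq hlam_a.le).symm
    rw [h1, hF3, show 4 * c ^ 2 * (Kb * β * lam0 + β * c')
        = (2 * c) ^ 2 * (Kb * β * lam0 + β * c') from by ring,
      Real.sqrt_mul (sq_nonneg (2 * c)), Real.sqrt_sq (by positivity : (0:ℝ) ≤ 2 * c), ← hβrr]
    ring
  -- the test vector V
  obtain ⟨V, hV⟩ : ∃ f : ℕ → ℝ, f = fun k : ℕ => rr ^ k * Real.sin ((k : ℝ) * θ) := ⟨_, rfl⟩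
  have hV0 : V 0 = 0 := by rw [hV]; simp
  have hVrec : ∀ k : ℕ, β * V (k + 2)
      = (lam0 + Kb * β) * V (k + 1) - (Kb * lam0 + c') * V k := by
    intro k
    have htrig : Real.sin (((k : ℝ) + 2) * θ)
        = 2 * c * Real.sin (((k : ℝ) + 1) * θ) - Real.sin ((k : ℝ) * θ) := by
      have h1 := Real.sin_add (((k : ℝ) + 1) * θ) θ
      have h2 := Real.sin_sub (((k : ℝ) + 1) * θ) θ
      have e1 : ((k : ℝ) + 1) * θ + θ = ((k : ℝ) + 2) * θ := by ring
      have e2 : ((k : ℝ) + 1) * θ - θ = (k : ℝ) * θ := by ring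
      rw [e1] at h1
      rw [e2] at h2
      rw [← hc] at h1 h2
      linarith
    rw [hV]
    simp only
    push_cast
    rw [htrig]
    linear_combination (rr ^ (k + 1) * Real.sin (((k : ℝ) + 1) * θ)) * hrrc
      - (rr ^ k * Real.sin ((k : ℝ) * θ)) * hrr2
  have hsinpos : ∀ k : ℕ, 1 ≤ k → k ≤ T + 1 → 0 < Real.sin ((k : ℝ) * θ) := by
    intro k h1 h2
    apply Real.sin_pos_of_pos_of_lt_pi
    · have : (1 : ℝ) ≤ (k : ℝ) := by exact_mod_cast h1
      nlinarith
    · have hk : (k : ℝ) < (T : ℝ) + 2 := by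
        have : (k : ℝ) ≤ (T : ℝ) + 1 := by exact_mod_cast h2
        linarith
      nlinarith
  have hV1 : 0 < V 1 := by
    rw [hV]; simp only
    exact mul_pos (pow_pos hrrp 1) (hsinpos 1 le_rfl (by omega))
  have hVpos : ∀ i : Fin (T + 1), 0 < V ((i : ℕ) + 1) := by
    intro i
    rw [hV]; simp only
    exact mul_pos (pow_pos hrrp _) (hsinpos _ (by omega) (by omega))
  have hVT2 : V (T + 2) = 0 := by
    rw [hV]; simp only
    have : ((T + 2 : ℕ) : ℝ) * θ = Real.pi := by push_cast; linarith [hθT]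
    rw [this, Real.sin_pi, mul_zero]
  -- key summation identity
  have hid : ∀ m : ℕ, c' * (∑ k ∈ Finset.range m, Kb ^ (m - k - 1) * V (k + 1))
      = lam0 * V (m + 1) - β * V (m + 2) + Kb ^ (m + 1) * (β * V 1) := by
    intro m
    induction m with
    | zero =>
      simp only [Finset.range_zero, Finset.sum_empty, mul_zero, zero_add, pow_one]
      have h0 := hVrec 0
      norm_num at h0 ⊢
      rw [hV0] at h0
      linear_combination h0
    | succ m ih =>
      rw [sum_rec]
      have hr := hVrec (m + 1)
      simp only [show m + 1 + 1 = m + 2 from rfl, show m + 1 + 2 = m + 3 from rfl] at hr ⊢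
      linear_combination Kb * ih + hr
  have hBnn : ∀ i j, 0 ≤ BM i j := by
    intro i j
    rw [hBM]
    split_ifs
    · exact hβ0.le
    · positivity
    · exact le_refl 0
  have hrowlow : ∀ i : Fin (T + 1),
      lam0 * V ((i : ℕ) + 1) ≤ BM.mulVec (fun j => V ((j : ℕ) + 1)) i := by
    intro i
    rw [row_abs β Kb c' T BM hBM V i, hid (i : ℕ)]
    have hnn : 0 ≤ Kb ^ ((i : ℕ) + 1) * (β * V 1) :=
      mul_nonneg (pow_nonneg hKb0.le _) (mul_nonneg hβ0.le hV1.le)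
    by_cases hi : (i : ℕ) + 1 < T + 1
    · rw [if_pos hi]; linarith
    · rw [if_neg hi]
      have hiT : (i : ℕ) = T := by omega
      rw [hiT] at hnn ⊢
      rw [hVT2]
      linarith
  -- upper-bound test vector
  obtain ⟨u, hu⟩ : ∃ x, x = Real.sqrt (c' / β) := ⟨_, rfl⟩
  have hup : 0 < u := by rw [hu]; exact Real.sqrt_pos.mpr (by positivity)
  have hu2 : u ^ 2 = c' / β := by rw [hu]; exact Real.sq_sqrt (by positivity)
  have hc'u : c' = β * u ^ 2 := by rw [hu2]; field_simp
  obtain ⟨t, ht⟩ : ∃ x, x = Kb + u := ⟨_, rfl⟩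
  have htp : 0 < t := by rw [ht]; positivity
  have htKb : Kb < t := by rw [ht]; linarith
  have hsumU : ∀ m : ℕ, ∑ k ∈ Finset.range m, Kb ^ (m - k - 1) * t ^ (k + 1)
      ≤ t ^ (m + 1) / u := by
    intro m
    induction m with
    | zero => simp only [Finset.range_zero, Finset.sum_empty, pow_one]; positivity
    | succ m ih =>
      rw [sum_rec Kb (fun k => t ^ k) m]
      have he : t ^ (m + 2) = (Kb + u) * t ^ (m + 1) := by rw [ht]; ring
      have h1 : Kb * (∑ k ∈ Finset.range m, Kb ^ (m - k - 1) * t ^ (k + 1))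
          ≤ Kb * (t ^ (m + 1) / u) := mul_le_mul_of_nonneg_left ih hKb0.le
      have h2 : Kb * (t ^ (m + 1) / u) + t ^ (m + 1) = t ^ (m + 2) / u := by
        rw [he]; field_simp
      calc Kb * (∑ k ∈ Finset.range m, Kb ^ (m - k - 1) * t ^ (k + 1)) + t ^ (m + 1)
          ≤ Kb * (t ^ (m + 1) / u) + t ^ (m + 1) := by linarith
        _ = t ^ (m + 2) / u := h2
        _ = t ^ (m + 1 + 1) / u := by norm_num
  have hrowup : ∀ i : Fin (T + 1),
      BM.mulVec (fun j => t ^ ((j : ℕ) + 1)) i ≤ (Kb * β + 2 * (β * u)) * t ^ ((i : ℕ) + 1) := by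
    intro i
    rw [row_abs β Kb c' T BM hBM (fun k => t ^ k) i]
    have h1 : (if (i : ℕ) + 1 < T + 1 then β * t ^ ((i : ℕ) + 2) else 0)
        ≤ β * t ^ ((i : ℕ) + 2) := by
      split_ifs
      · exact le_refl _
      · positivity
    have h2 : c' * (∑ k ∈ Finset.range (i : ℕ), Kb ^ ((i : ℕ) - k - 1) * t ^ (k + 1))
        ≤ c' * (t ^ ((i : ℕ) + 1) / u) := mul_le_mul_of_nonneg_left (hsumU _) hc'0.le
    have h3 : β * t ^ ((i : ℕ) + 2) + c' * (t ^ ((i : ℕ) + 1) / u)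
        = (Kb * β + 2 * (β * u)) * t ^ ((i : ℕ) + 1) := by
      have he : t ^ ((i : ℕ) + 2) = (Kb + u) * t ^ ((i : ℕ) + 1) := by rw [ht]; ring
      rw [he, hc'u]
      field_simp
      ring
    linarith
  -- spectral radius set
  haveI : Nontrivial (Matrix (Fin (T + 1)) (Fin (T + 1)) ℂ) := by
    refine ⟨0, 1, fun hcon => ?_⟩
    have := congr_fun (congr_fun hcon 0) 0
    simp [Matrix.one_apply] at this
  have hSne : Set.Nonempty
      {x : ℝ | ∃ μ : ℂ, μ ∈ spectrum ℂ (BM.map Complex.ofReal) ∧ x = ‖μ‖} := by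
    obtain ⟨μ, hμ⟩ := spectrum.nonempty (BM.map Complex.ofReal)
    exact ⟨‖μ‖, μ, hμ, rfl⟩
  have hup_all : ∀ x ∈ {x : ℝ | ∃ μ : ℂ, μ ∈ spectrum ℂ (BM.map Complex.ofReal)
      ∧ x = ‖μ‖}, x ≤ Kb * β + 2 * (β * u) := by
    rintro x ⟨μ, hμ, rfl⟩
    exact eig_upper BM hBnn (fun j => t ^ ((j : ℕ) + 1)) (fun j => by positivity) _ hrowup hμ
  have hbdd : BddAbove
      {x : ℝ | ∃ μ : ℂ, μ ∈ spectrum ℂ (BM.map Complex.ofReal) ∧ x = ‖μ‖} :=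
    ⟨Kb * β + 2 * (β * u), hup_all⟩
  constructor
  · -- upper bound
    have hlamstar : Kb * β + 2 * Real.sqrt (β * c') = Kb * β + 2 * (β * u) := by
      rw [show β * c' = (β * u) ^ 2 from by rw [hc'u]; ring, Real.sqrt_sq (by positivity)]
    rw [ge_iff_le, hlamstar]
    simp only [specRad]
    exact csSup_le hSne hup_all
  · -- lower bound
    obtain ⟨μ, hμ, hle⟩ := eig_lower (by omega) BM hBnn (fun j => V ((j : ℕ) + 1)) hVpos
      lam0 hlam0nn hrowlow
    have hlow : lam0 ≤ specRad BM := by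
      simp only [specRad]
      exact le_trans hle (le_csSup hbdd ⟨μ, hμ, rfl⟩)
    have hARG : (4 * Kb * β * c ^ 2 - 2 * Kb * β) ^ 2
        - 4 * ((Kb * β) ^ 2 - 4 * (β * c') * c ^ 2) = (4 * c * w) ^ 2 := by
      linear_combination (-16 * c ^ 2 : ℝ) * hw2
    rw [ge_iff_le, hARG, Real.sqrt_sq (by positivity)]
    rw [hlam0] at hlow
    linarith

end SpectralHelpers

/-- Asymptotic two-sided bound on `ρ(B_T)` (Theorem 3.12). -/
theorem stmt11 (L1 K1 rho β : ℝ)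
    (hL1 : 0 < L1) (hK1 : 0 < K1) (hrho : 0 < rho)
    (hβ0 : 0 < β) (hβ1 : β < 1) (hβK : β * K1 < 2)
    (hKbar0 : 0 < Kbar L1 K1 rho β) (hKbar1 : Kbar L1 K1 rho β < 1) :
    ∃ T0 : ℕ, ∀ T : ℕ, T0 ≤ T →
      Kbar L1 K1 rho β * β + 2 * Real.sqrt (β * Lbar L1 K1 β * K1 / rho)
        ≥ specRad (BT L1 K1 rho β T)
      ∧ specRad (BT L1 K1 rho β T)
        ≥ (2 * Kbar L1 K1 rho β * β * (Real.cos (Real.pi / ((T : ℝ) + 2))) ^ 2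
              - Kbar L1 K1 rho β * β)
          + (1 / 2) * Real.sqrt
              ((4 * Kbar L1 K1 rho β * β * (Real.cos (Real.pi / ((T : ℝ) + 2))) ^ 2
                  - 2 * Kbar L1 K1 rho β * β) ^ 2
                - 4 * ((Kbar L1 K1 rho β * β) ^ 2
                    - 4 * (β * Lbar L1 K1 β * K1 / rho)
                      * (Real.cos (Real.pi / ((T : ℝ) + 2))) ^ 2)) := by
  have hden : (0:ℝ) < 1 - β * K1 / 2 := by nlinarith
  have hLb : 0 < Lbar L1 K1 β := div_pos hL1 hden
  have hc'0 : 0 < Lbar L1 K1 β * K1 / rho := by positivity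
  have ha0 : 0 < Kbar L1 K1 rho β * β := mul_pos hKbar0 hβ0
  set δ := min (1/2 : ℝ)
      ((β * (Lbar L1 K1 β * K1 / rho)) / (Kbar L1 K1 rho β * β) ^ 2) with hδ
  have hδp : 0 < δ := lt_min (by norm_num) (by positivity)
  obtain ⟨T0, hT0⟩ := exists_nat_ge (Real.pi / Real.sqrt δ)
  refine ⟨T0, fun T hT => ?_⟩
  have hsd : 0 < Real.sqrt δ := Real.sqrt_pos.mpr hδp
  have hT2 : (0:ℝ) < (T:ℝ) + 2 := by positivity
  have hTge : Real.pi / Real.sqrt δ ≤ (T:ℝ) + 2 := by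
    have h1 : (T0:ℝ) ≤ (T:ℝ) := Nat.cast_le.mpr hT
    linarith
  have hθle : Real.pi / ((T:ℝ)+2) ≤ Real.sqrt δ := by
    rw [div_le_iff₀ hT2]
    have h2 := (div_le_iff₀ hsd).mp hTge
    linarith
  have hθsq : (Real.pi / ((T:ℝ)+2))^2 ≤ δ := by
    have h0 : 0 ≤ Real.pi / ((T:ℝ)+2) := by positivity
    nlinarith [Real.sq_sqrt hδp.le]
  have hsmall1 : (Real.pi / ((T:ℝ)+2))^2 ≤ 1/2 := le_trans hθsq (min_le_left _ _)
  have hsmall2 : (Kbar L1 K1 rho β * β)^2 * (Real.pi / ((T:ℝ)+2))^2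
      ≤ β * (Lbar L1 K1 β * K1 / rho) := by
    have h1 := le_trans hθsq (min_le_right _ _)
    calc (Kbar L1 K1 rho β * β)^2 * (Real.pi / ((T:ℝ)+2))^2
        ≤ (Kbar L1 K1 rho β * β)^2
            * ((β * (Lbar L1 K1 β * K1 / rho)) / (Kbar L1 K1 rho β * β) ^ 2) :=
          mul_le_mul_of_nonneg_left h1 (sq_nonneg _)
      _ = β * (Lbar L1 K1 β * K1 / rho) := by field_simp
  have hmain := specBound T β (Kbar L1 K1 rho β) (Lbar L1 K1 β * K1 / rho) hβ0 hKbar0 hc'0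
      (BT L1 K1 rho β T) (fun i j => rfl) hsmall1 hsmall2
  rw [show β * Lbar L1 K1 β * K1 / rho = β * (Lbar L1 K1 β * K1 / rho) from by ring]
  exact hmain
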